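/- The set W̃ = ⋃_{k∈ℤ} E_k ∪ {(x,0,0) : x ∈ ℝ} is connected but not locally connected. -/

import Mathlib

noncomputable section

open Set Filter Topology

/-- `T₁(x,y,z) = (x/2, 2y, 2z)`. -/
def T1 : ℝ × ℝ × ℝ → ℝ × ℝ × ℝ := fun v => (v.1 / 2, 2 * v.2.1, 2 * v.2.2)

/-- `T₂(x,y,z) = (x/2, y/2, z/2)`. -/
def T2 : ℝ × ℝ × ℝ → ℝ × ℝ × ℝ := fun v => (v.1 / 2, v.2.1 / 2, v.2.2 / 2)

/-- The `n`-th power (`n ∈ ℤ`) of `T₂`: `T₂ⁿ(v) = 2⁻ⁿ • v`. -/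
def T2pow (n : ℤ) : ℝ × ℝ × ℝ → ℝ × ℝ × ℝ := fun v => ((2 : ℝ) ^ (-n)) • v

/-- The closed (Euclidean) ball `B` of radius `r` centered at `(3/2, 0, 0)`. -/
def Bset (r : ℝ) : Set (ℝ × ℝ × ℝ) :=
  {v | (v.1 - 3 / 2) ^ 2 + v.2.1 ^ 2 + v.2.2 ^ 2 ≤ r ^ 2}

/-- `B_n = T₂ⁿ(B)` for `n ∈ ℤ`. -/
def Bn (r : ℝ) (n : ℤ) : Set (ℝ × ℝ × ℝ) := T2pow n '' Bset r

/-- The continuum `E`: the union of the segment `[3/2 - r/2, 3/2 + r/2] × {0} × {0}`,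
the segment `{3/2 - r/2} × [0, r/2] × {0}`, and the segments
`{3/2 - r/2 + r/k} × [0, r/2] × {0}` for integers `k ≥ 1`. -/
def Eset (r : ℝ) : Set (ℝ × ℝ × ℝ) :=
  {v | v.1 ∈ Icc (3 / 2 - r / 2) (3 / 2 + r / 2) ∧ v.2.1 = 0 ∧ v.2.2 = 0} ∪
  {v | v.1 = 3 / 2 - r / 2 ∧ v.2.1 ∈ Icc 0 (r / 2) ∧ v.2.2 = 0} ∪
  {v | ∃ k : ℕ, 1 ≤ k ∧ v.1 = 3 / 2 - r / 2 + r / (k : ℝ) ∧ v.2.1 ∈ Icc 0 (r / 2) ∧ v.2.2 = 0}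

/-- `E_k = T₂ᵏ(E)` for `k ∈ ℤ`. -/
def Ek (r : ℝ) (k : ℤ) : Set (ℝ × ℝ × ℝ) := T2pow k '' Eset r

/-- `W̃ = ⋃_{k ∈ ℤ} E_k ∪ {(x,0,0) : x ∈ ℝ}`. -/
def Wtilde (r : ℝ) : Set (ℝ × ℝ × ℝ) :=
  (⋃ k : ℤ, Ek r k) ∪ {v | v.2.1 = 0 ∧ v.2.2 = 0}

/-- The (global) stable set `W^s_f(a) = {b : ‖fⁿ(a) - fⁿ(b)‖ → 0 as n → +∞}`. -/
def Ws (f : ℝ × ℝ × ℝ → ℝ × ℝ × ℝ) (a : ℝ × ℝ × ℝ) : Set (ℝ × ℝ × ℝ) :=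
  {b | Tendsto (fun n : ℕ => ‖f^[n] a - f^[n] b‖) atTop (𝓝 0)}

-- auxiliary sets
def baseSeg (r : ℝ) : Set (ℝ×ℝ×ℝ) :=
  {v | v.1 ∈ Icc (3/2 - r/2) (3/2 + r/2) ∧ v.2.1 = 0 ∧ v.2.2 = 0}
def tooth (r c : ℝ) : Set (ℝ×ℝ×ℝ) := {v | v.1 = c ∧ v.2.1 ∈ Icc 0 (r/2) ∧ v.2.2 = 0}
def axisSet : Set (ℝ×ℝ×ℝ) := {v | v.2.1 = 0 ∧ v.2.2 = 0}

lemma convex_baseSeg (r : ℝ) : Convex ℝ (baseSeg r) := by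
  rintro x ⟨⟨hx1, hx2⟩, hx3, hx4⟩ y ⟨⟨hy1, hy2⟩, hy3, hy4⟩ a b ha hb hab
  refine ⟨⟨?_, ?_⟩, ?_, ?_⟩ <;>
    simp only [Prod.fst_add, Prod.snd_add, Prod.smul_fst, Prod.smul_snd, smul_eq_mul,
      mem_Icc, hx3, hx4, hy3, hy4, mul_zero, add_zero] <;> nlinarith

lemma convex_tooth (r c : ℝ) : Convex ℝ (tooth r c) := by
  rintro x ⟨hx1, ⟨hx2, hx3⟩, hx4⟩ y ⟨hy1, ⟨hy2, hy3⟩, hy4⟩ a b ha hb hab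
  refine ⟨?_, ⟨?_, ?_⟩, ?_⟩ <;>
    simp only [Prod.fst_add, Prod.snd_add, Prod.smul_fst, Prod.smul_snd, smul_eq_mul,
      hx1, hx4, hy1, hy4, mul_zero, add_zero] <;>
    first
    | nlinarith
    | linear_combination c * hab

lemma convex_axisSet : Convex ℝ axisSet := by
  rintro x ⟨hx1, hx2⟩ y ⟨hy1, hy2⟩ a b ha hb hab
  constructor <;>
    simp only [Prod.fst_add, Prod.snd_add, Prod.smul_fst, Prod.smul_snd, smul_eq_mul,
      hx1, hx2, hy1, hy2, mul_zero, add_zero]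

lemma Eset_eq (r : ℝ) :
    Eset r = ⋃ k : ℕ, (baseSeg r ∪ tooth r (3/2 - r/2) ∪ tooth r (3/2 - r/2 + r/(k:ℝ))) := by
  ext v
  simp only [Eset, baseSeg, tooth, mem_iUnion, mem_union, mem_setOf_eq]
  constructor
  · rintro ((h | h) | ⟨k, hk, h⟩)
    · exact ⟨0, Or.inl (Or.inl h)⟩
    · exact ⟨0, Or.inl (Or.inr h)⟩
    · exact ⟨k, Or.inr h⟩
  · rintro ⟨k, (h | h) | h⟩
    · exact Or.inl (Or.inl h)
    · exact Or.inl (Or.inr h)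
    · rcases Nat.eq_zero_or_pos k with hk | hk
      · subst hk
        refine Or.inl (Or.inr ?_)
        simpa using h
      · exact Or.inr ⟨k, hk, h⟩

lemma Eset_preconn {r : ℝ} (hr0 : 0 < r) : IsPreconnected (Eset r) := by
  rw [Eset_eq]
  apply isPreconnected_iUnion
  · refine ⟨((3/2 : ℝ), (0:ℝ), (0:ℝ)), ?_⟩
    rw [mem_iInter]
    intro k
    exact Or.inl (Or.inl ⟨⟨by linarith, by linarith⟩, rfl, rfl⟩)
  · intro k
    have hdiv0 : (0:ℝ) ≤ r/(k:ℝ) := by positivity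
    have hdivle : r/(k:ℝ) ≤ r := by
      rcases Nat.eq_zero_or_pos k with hk | hk
      · subst hk; simp; linarith
      · exact div_le_self hr0.le (by exact_mod_cast hk)
    have h1 : IsPreconnected (baseSeg r ∪ tooth r (3/2 - r/2)) := by
      apply IsPreconnected.union ((3/2 - r/2 : ℝ), (0:ℝ), (0:ℝ))
      · exact ⟨⟨le_refl _, by linarith⟩, rfl, rfl⟩
      · exact ⟨rfl, ⟨le_refl _, by linarith⟩, rfl⟩
      · exact (convex_baseSeg r).isPreconnected
      · exact (convex_tooth r _).isPreconnected
    apply IsPreconnected.union ((3/2 - r/2 + r/(k:ℝ) : ℝ), (0:ℝ), (0:ℝ))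
    · exact Or.inl ⟨⟨by linarith, by linarith⟩, rfl, rfl⟩
    · exact ⟨rfl, ⟨le_refl _, by linarith⟩, rfl⟩
    · exact h1
    · exact (convex_tooth r _).isPreconnected

lemma cont_T2pow (n : ℤ) : Continuous (T2pow n) := continuous_const_smul _

lemma Wtilde_connected {r : ℝ} (hr0 : 0 < r) : IsConnected (Wtilde r) := by
  constructor
  · exact ⟨((0:ℝ),(0:ℝ),(0:ℝ)), Or.inr ⟨rfl, rfl⟩⟩
  · have h : Wtilde r = ⋃ k : ℤ, (Ek r k ∪ axisSet) := by
      ext v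
      simp only [Wtilde, axisSet, mem_union, mem_iUnion, mem_setOf_eq]
      constructor
      · rintro (h | h)
        · obtain ⟨k, hk⟩ := h
          exact ⟨k, Or.inl hk⟩
        · exact ⟨0, Or.inr h⟩
      · rintro ⟨k, h | h⟩
        · exact Or.inl ⟨k, h⟩
        · exact Or.inr h
    rw [h]
    apply isPreconnected_iUnion
    · exact ⟨((0:ℝ),(0:ℝ),(0:ℝ)), by rw [mem_iInter]; exact fun k => Or.inr ⟨rfl, rfl⟩⟩
    · intro k
      apply IsPreconnected.union (T2pow k ((3/2 : ℝ), (0:ℝ), (0:ℝ)))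
      · exact ⟨((3/2 : ℝ), (0:ℝ), (0:ℝ)), Or.inl (Or.inl ⟨⟨by linarith, by linarith⟩, rfl, rfl⟩), rfl⟩
      · constructor <;> simp [T2pow]
      · exact (Eset_preconn hr0).image _ (cont_T2pow k).continuousOn
      · exact convex_axisSet.isPreconnected

lemma mem_W_of_E {r : ℝ} {v : ℝ×ℝ×ℝ} (h : v ∈ Eset r) : v ∈ Wtilde r :=
  Or.inl (mem_iUnion.2 ⟨0, ⟨v, h, by simp [T2pow]⟩⟩)

lemma key {r : ℝ} (hr0 : 0 < r) (hr2 : r < 1/2) (v : ℝ×ℝ×ℝ) (hv : v ∈ Wtilde r)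
    (h1 : |v.1 - (3/2 - r/2)| < r/4) (h2 : |v.2.1 - r/2| < r/4) :
    v.1 = 3/2 - r/2 ∨ ∃ k : ℕ, 1 ≤ k ∧ v.1 = 3/2 - r/2 + r/(k:ℝ) := by
  have hy : r/4 < v.2.1 := by have := abs_lt.1 h2; linarith
  have habs := abs_lt.1 h1
  rcases hv with hv | hv
  · obtain ⟨k, u, hu, huv⟩ : ∃ k u, u ∈ Eset r ∧ T2pow k u = v := by
      obtain ⟨k, hk⟩ := mem_iUnion.1 hv
      obtain ⟨u, hu, huv⟩ := hk
      exact ⟨k, u, hu, huv⟩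
    have hu1 : 3/2 - r/2 ≤ u.1 ∧ u.1 ≤ 3/2 + r/2 := by
      rcases hu with (⟨h, _⟩ | ⟨h, _⟩) | ⟨m, hm, h, _⟩
      · exact ⟨h.1, h.2⟩
      · constructor <;> rw [h] <;> linarith
      · have h0 : (0:ℝ) ≤ r/(m:ℝ) := by positivity
        have hle : r/(m:ℝ) ≤ r := div_le_self hr0.le (by exact_mod_cast hm)
        constructor <;> rw [h] <;> linarith
    have hvu1 : v.1 = (2:ℝ)^(-k) * u.1 := by rw [← huv]; simp [T2pow]
    have hupos : (0:ℝ) ≤ u.1 := by linarith [hu1.1]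
    have hk0 : k = 0 := by
      by_contra hk
      rcases (by omega : 1 ≤ k ∨ k ≤ -1) with hk1 | hk1
      · have hc : (2:ℝ)^(-k) ≤ 1/2 := by
          have := zpow_le_zpow_right₀ (a := (2:ℝ)) (by norm_num) (show -k ≤ -1 by omega)
          simpa using this
        have hle : v.1 ≤ (1/2) * u.1 := by
          rw [hvu1]; exact mul_le_mul_of_nonneg_right hc hupos
        linarith [hu1.2, habs.1]
      · have hc : (2:ℝ) ≤ (2:ℝ)^(-k) := by
          have := zpow_le_zpow_right₀ (a := (2:ℝ)) (by norm_num) (show 1 ≤ -k by omega)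
          simpa using this
        have hle : 2 * u.1 ≤ v.1 := by
          rw [hvu1]; exact mul_le_mul_of_nonneg_right hc hupos
        linarith [hu1.1, habs.2]
    subst hk0
    have hv_eq : v = u := by rw [← huv]; simp [T2pow]
    subst hv_eq
    rcases hu with (⟨_, hy0, _⟩ | ⟨h, _⟩) | ⟨m, hm, h, _⟩
    · exfalso; rw [hy0] at hy; linarith
    · exact Or.inl h
    · exact Or.inr ⟨m, hm, h⟩
  · exfalso; rw [hv.1] at hy; linarith

lemma not_lc {r : ℝ} (hr0 : 0 < r) (hr2 : r < 1/2) :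
    ¬ LocallyConnectedSpace ↥(Wtilde r) := by
  intro hLC
  have hp : ((3/2 - r/2 : ℝ), (r/2 : ℝ), (0:ℝ)) ∈ Wtilde r :=
    mem_W_of_E (Or.inl (Or.inr ⟨rfl, ⟨by linarith, le_refl _⟩, rfl⟩))
  set x : ↥(Wtilde r) := ⟨((3/2 - r/2 : ℝ), (r/2 : ℝ), (0:ℝ)), hp⟩ with hx
  have hU : Metric.ball x (r/4) ∈ 𝓝 x := Metric.ball_mem_nhds x (by linarith)
  obtain ⟨V, hVnhds, hVpre, hVsub⟩ :=
    (locallyConnectedSpace_iff_connected_subsets.1 hLC) x _ hU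
  -- the points q j
  have hqmem : ∀ j : ℕ, ((3/2 - r/2 + r/((j:ℝ)+1) : ℝ), (r/2 : ℝ), (0:ℝ)) ∈ Wtilde r := by
    intro j
    apply mem_W_of_E
    refine Or.inr ⟨j+1, by omega, by push_cast; ring, ⟨by linarith, le_refl _⟩, rfl⟩
  set q : ℕ → ↥(Wtilde r) := fun j => ⟨_, hqmem j⟩ with hq
  have htend : Tendsto q atTop (𝓝 x) := by
    rw [tendsto_subtype_rng]
    have h2 : Tendsto (fun j : ℕ => r/((j:ℝ)+1)) atTop (𝓝 0) := by
      have := tendsto_one_div_add_atTop_nhds_zero_nat.const_mul r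
      simpa [div_eq_mul_inv] using this
    have h1 : Tendsto (fun j : ℕ => 3/2 - r/2 + r/((j:ℝ)+1)) atTop (𝓝 (3/2 - r/2)) := by
      have := Tendsto.add
        (tendsto_const_nhds : Tendsto (fun _ : ℕ => (3/2 - r/2 : ℝ)) atTop (𝓝 (3/2 - r/2))) h2
      simpa using this
    show Tendsto (fun j : ℕ => ((3/2 - r/2 + r/((j:ℝ)+1) : ℝ), ((r/2 : ℝ), (0:ℝ)))) atTop
      (𝓝 ((3/2 - r/2 : ℝ), ((r/2 : ℝ), (0:ℝ))))
    exact h1.prodMk_nhds tendsto_const_nhds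
  obtain ⟨j, hjV⟩ : ∃ j, q j ∈ V := by
    exact (show ∀ᶠ j in atTop, q j ∈ V from htend hVnhds).exists
  -- image of V under first coordinate
  set S : Set ℝ := (fun w : ↥(Wtilde r) => (w : ℝ×ℝ×ℝ).1) '' V with hSdef
  have hS : IsPreconnected S :=
    hVpre.image _ ((continuous_fst.comp continuous_subtype_val).continuousOn)
  have haS : (3/2 - r/2 : ℝ) ∈ S := ⟨x, mem_of_mem_nhds hVnhds, rfl⟩
  have hbS : (3/2 - r/2 + r/((j:ℝ)+1) : ℝ) ∈ S := ⟨q j, hjV, rfl⟩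
  have hmpos : (0:ℝ) < (j:ℝ)+1 := by positivity
  have hfrac : r/((j:ℝ)+2) < r/((j:ℝ)+1) :=
    div_lt_div_of_pos_left hr0 hmpos (by linarith)
  have hfp1 : (0:ℝ) < r/((j:ℝ)+1) := by positivity
  have hfp2 : (0:ℝ) < r/((j:ℝ)+2) := by positivity
  set t : ℝ := 3/2 - r/2 + (r/((j:ℝ)+1) + r/((j:ℝ)+2))/2 with htdef
  have htS : t ∈ S := by
    apply hS.ordConnected.out haS hbS
    constructor <;> [skip; skip] <;> rw [htdef] <;> linarith
  obtain ⟨w, hwV, hwt⟩ := htS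
  have hwball : dist (w : ℝ×ℝ×ℝ) ((3/2 - r/2 : ℝ), (r/2 : ℝ), (0:ℝ)) < r/4 := by
    have := hVsub hwV
    rw [Metric.mem_ball, Subtype.dist_eq] at this
    exact this
  rw [Prod.dist_eq] at hwball
  have hd1 : |(w : ℝ×ℝ×ℝ).1 - (3/2 - r/2)| < r/4 := by
    have h' := lt_of_le_of_lt (le_max_left _ _) hwball
    rw [Real.dist_eq] at h'
    exact h'
  have hd2 : |(w : ℝ×ℝ×ℝ).2.1 - r/2| < r/4 := by
    have h' := lt_of_le_of_lt (le_max_right _ _) hwball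
    rw [Prod.dist_eq] at h'
    have h'' := lt_of_le_of_lt (le_max_left _ _) h'
    rw [Real.dist_eq] at h''
    exact h''
  have hkey := key hr0 hr2 (w : ℝ×ℝ×ℝ) w.2 hd1 hd2
  have hwt' : ((w : ℝ×ℝ×ℝ).1) = t := hwt
  rw [hwt'] at hkey
  rcases hkey with h | ⟨k, hk1, hkeq⟩
  · rw [htdef] at h; linarith
  · have hkpos : (0:ℝ) < (k:ℝ) := by exact_mod_cast hk1
    have heq : r/(k:ℝ) = (r/((j:ℝ)+1) + r/((j:ℝ)+2))/2 := by
      rw [htdef] at hkeq; linarith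
    have hgt : r/((j:ℝ)+2) < r/(k:ℝ) := by rw [heq]; linarith
    have hlt : r/(k:ℝ) < r/((j:ℝ)+1) := by rw [heq]; linarith
    have h1 : ((j:ℝ)+1) < (k:ℝ) := by
      have := (div_lt_div_iff₀ hkpos hmpos).1 hlt
      nlinarith
    have h2 : (k:ℝ) < (j:ℝ)+2 := by
      have := (div_lt_div_iff₀ (by linarith : (0:ℝ) < (j:ℝ)+2) hkpos).1 hgt
      nlinarith
    have hj1 : j + 1 < k := by exact_mod_cast h1
    have hj2 : k < j + 2 := by exact_mod_cast h2
    omega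


/-- The set `W̃ = ⋃_{k ∈ ℤ} E_k ∪ {(x,0,0) : x ∈ ℝ}` is connected but not
locally connected. -/
theorem stmt_18 (r : ℝ) (hr : r ∈ Ioo (0 : ℝ) (1 / 2)) :
    IsConnected (Wtilde r) ∧ ¬ LocallyConnectedSpace ↥(Wtilde r) :=
  ⟨Wtilde_connected hr.1, not_lc hr.1 hr.2⟩
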